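/- arXiv:2207.09532 — 3 statements merged into one kernel-verified Lean document; each statement's English description precedes it below -/
import Mathlib

section
/- Let C be an arc of length L on a circle of radius R, and let L be a lattice with L ≤ 2(A_L R)^{1/3}. Then C contains at most 2 points of the lattice. -/
open Real

noncomputable def circlePt (O : EuclideanSpace ℝ (Fin 2)) (R θ : ℝ) :
    EuclideanSpace ℝ (Fin 2) :=
  (WithLp.equiv 2 (Fin 2 → ℝ)).symm ![O 0 + R * cos θ, O 1 + R * sin θ]

/-- The arc of length `L` on the circle of radius `R` centered at `O`,
starting at angle `θ₀`. -/
noncomputable def arcOf (O : EuclideanSpace ℝ (Fin 2)) (R θ₀ L : ℝ) :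
    Set (EuclideanSpace ℝ (Fin 2)) :=
  circlePt O R '' Set.Icc θ₀ (θ₀ + L / R)

def lat (v₀ v₁ v₂ : EuclideanSpace ℝ (Fin 2)) : Set (EuclideanSpace ℝ (Fin 2)) :=
  {P | ∃ m n : ℤ, P = v₀ + (m : ℝ) • v₁ + (n : ℝ) • v₂}

noncomputable def wedge (u v : EuclideanSpace ℝ (Fin 2)) : ℝ := u 0 * v 1 - u 1 * v 0

lemma sin3_id' (u v : ℝ) : Real.sin (2*u) + Real.sin (2*v) - Real.sin (2*u + 2*v)
    = 4 * Real.sin u * Real.sin v * Real.sin (u + v) := by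
  have h : 2*u + 2*v = 2*(u+v) := by ring
  rw [h, Real.sin_two_mul, Real.sin_two_mul, Real.sin_two_mul, Real.sin_add, Real.cos_add]
  linear_combination (-2 * Real.sin u * Real.cos u) * Real.sin_sq_add_cos_sq v +
    (-2 * Real.sin v * Real.cos v) * Real.sin_sq_add_cos_sq u

lemma sin3_id (x y : ℝ) : Real.sin x + Real.sin y - Real.sin (x + y)
    = 4 * Real.sin (x/2) * Real.sin (y/2) * Real.sin ((x+y)/2) := by
  have h := sin3_id' (x/2) (y/2)
  have e1 : 2*(x/2) = x := by ring
  have e2 : 2*(y/2) = y := by ring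
  have e3 : x/2 + y/2 = (x+y)/2 := by ring
  rw [e1, e2, e3] at h
  exact h

lemma abs_sin_lt {x : ℝ} (hx : 0 < x) : |Real.sin x| < x := by
  rcases le_or_gt 0 (Real.sin x) with h | h
  · rw [abs_of_nonneg h]; exact Real.sin_lt hx
  · rw [abs_of_neg h]
    have hπ : π < x := by
      by_contra hle; push_neg at hle
      have := Real.sin_nonneg_of_nonneg_of_le_pi hx.le hle; linarith
    have h1 : -Real.sin x ≤ 1 := by linarith [Real.neg_one_le_sin x]
    linarith [Real.pi_gt_three]

lemma wedge_comb (v₁ v₂ : EuclideanSpace ℝ (Fin 2)) (x y z w : ℝ) :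
    wedge (x • v₁ + y • v₂) (z • v₁ + w • v₂) = (x*w - y*z) * wedge v₁ v₂ := by
  simp only [wedge, PiLp.add_apply, PiLp.smul_apply, smul_eq_mul]
  ring

lemma wedge_ne (v₁ v₂ : EuclideanSpace ℝ (Fin 2))
    (hli : LinearIndependent ℝ ![v₁, v₂]) : wedge v₁ v₂ ≠ 0 := by
  rw [linearIndependent_fin2] at hli
  obtain ⟨h2, hall⟩ := hli
  simp only [Matrix.cons_val_one, Matrix.head_cons, Matrix.cons_val_zero] at h2 hall
  intro hw
  simp only [wedge] at hw
  rcases eq_or_ne (v₂ 0) 0 with h0 | h0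
  · rcases eq_or_ne (v₂ 1) 0 with h1 | h1
    · apply h2; ext i; fin_cases i <;> simp [h0, h1]
    · apply hall (v₁ 1 / v₂ 1)
      ext i; fin_cases i <;> simp only [PiLp.smul_apply, smul_eq_mul, Fin.zero_eta, Fin.mk_one]
      · field_simp
        nlinarith [hw]
      · field_simp
  · apply hall (v₁ 0 / v₂ 0)
    ext i; fin_cases i <;> simp only [PiLp.smul_apply, smul_eq_mul, Fin.zero_eta, Fin.mk_one]
    · field_simp
    · field_simp
      nlinarith [hw]

lemma wedge_circle (O : EuclideanSpace ℝ (Fin 2)) (R a b c : ℝ) :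
    wedge (circlePt O R b - circlePt O R a) (circlePt O R c - circlePt O R a)
      = 4 * R^2 * Real.sin ((b-a)/2) * Real.sin ((c-b)/2) * Real.sin ((c-a)/2) := by
  have key := sin3_id (b-a) (c-b)
  have e : b - a + (c - b) = c - a := by ring
  rw [e] at key
  rw [Real.sin_sub, Real.sin_sub, Real.sin_sub] at key
  simp only [wedge, circlePt, PiLp.sub_apply, WithLp.equiv_symm_apply, PiLp.toLp_apply,
    Matrix.cons_val_zero, Matrix.cons_val_one, Matrix.head_cons]
  linear_combination R^2 * key

lemma circlePt_eq (O : EuclideanSpace ℝ (Fin 2)) (R a b : ℝ) (n : ℤ)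
    (h : b = a + n * (2 * π)) : circlePt O R a = circlePt O R b := by
  unfold circlePt
  rw [h, Real.cos_add_int_mul_two_pi, Real.sin_add_int_mul_two_pi]

lemma quarter_aux (a b : ℝ) : a * b ≤ (a + b)^2 / 4 := by
  nlinarith [sq_nonneg (a - b)]

lemma half_le_aux (x L R : ℝ) (hR : 0 < R) (h : x ≤ L / R) : x / 2 ≤ L / (2 * R) := by
  have e : L / (2 * R) = (L / R) / 2 := by
    ring
  rw [e]
  linarith

lemma key_lemma (O v₀ v₁ v₂ : EuclideanSpace ℝ (Fin 2))
    (hli : LinearIndependent ℝ ![v₁, v₂])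
    (R L : ℝ) (hR : 0 < R) (hL3 : L^3 ≤ 8 * |wedge v₁ v₂| * R)
    (a b c : ℝ) (hab : a < b) (hbc : b < c) (hca : c - a ≤ L / R)
    (ha : circlePt O R a ∈ lat v₀ v₁ v₂)
    (hb : circlePt O R b ∈ lat v₀ v₁ v₂)
    (hc : circlePt O R c ∈ lat v₀ v₁ v₂)
    (hab' : circlePt O R a ≠ circlePt O R b)
    (hbc' : circlePt O R b ≠ circlePt O R c)
    (hac' : circlePt O R a ≠ circlePt O R c) : False := by
  set A := |wedge v₁ v₂| with hA
  have hA0 : 0 < A := abs_pos.mpr (wedge_ne v₁ v₂ hli)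
  obtain ⟨ma, na, hpa⟩ := ha
  obtain ⟨mb, nb, hpb⟩ := hb
  obtain ⟨mc, nc, hpc⟩ := hc
  have hdiffb : circlePt O R b - circlePt O R a
      = ((mb - ma : ℤ) : ℝ) • v₁ + ((nb - na : ℤ) : ℝ) • v₂ := by
    rw [hpa, hpb]; push_cast; module
  have hdiffc : circlePt O R c - circlePt O R a
      = ((mc - ma : ℤ) : ℝ) • v₁ + ((nc - na : ℤ) : ℝ) • v₂ := by
    rw [hpa, hpc]; push_cast; module
  set k : ℤ := (mb - ma) * (nc - na) - (nb - na) * (mc - ma) with hk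
  have hW : wedge (circlePt O R b - circlePt O R a) (circlePt O R c - circlePt O R a)
      = (k : ℝ) * wedge v₁ v₂ := by
    rw [hdiffb, hdiffc, wedge_comb, hk]; push_cast; ring
  have htrig := wedge_circle O R a b c
  set α := (b - a)/2 with hα
  set β := (c - b)/2 with hβ
  set s := (c - a)/2 with hs
  have hα0 : 0 < α := by rw [hα]; linarith
  have hβ0 : 0 < β := by rw [hβ]; linarith
  have hs0 : 0 < s := by rw [hs]; linarith
  rcases eq_or_ne k 0 with hk0 | hk0
  · rw [hk0] at hW
    simp only [Int.cast_zero, zero_mul] at hW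
    rw [hW] at htrig
    have : Real.sin α = 0 ∨ Real.sin β = 0 ∨ Real.sin s = 0 := by
      by_contra hcon
      push_neg at hcon
      obtain ⟨h1, h2, h3⟩ := hcon
      have hne : 4 * R^2 * Real.sin α * Real.sin β * Real.sin s ≠ 0 := by
        have : R ≠ 0 := hR.ne'
        positivity
      exact hne htrig.symm
    rcases this with h | h | h
    · obtain ⟨n, hn⟩ := Real.sin_eq_zero_iff.mp h
      exact hab' (circlePt_eq O R a b n (by rw [hα] at hn; linarith))
    · obtain ⟨n, hn⟩ := Real.sin_eq_zero_iff.mp h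
      exact hbc' (circlePt_eq O R b c n (by rw [hβ] at hn; linarith))
    · obtain ⟨n, hn⟩ := Real.sin_eq_zero_iff.mp h
      exact hac' (circlePt_eq O R a c n (by rw [hs] at hn; linarith))
  · have hge : A ≤ |(k : ℝ) * wedge v₁ v₂| := by
      rw [abs_mul]
      have h1 : (1:ℝ) ≤ |(k:ℝ)| := by
        rw [← Int.cast_abs]
        exact_mod_cast Int.one_le_abs hk0
      nlinarith [hA0]
    rw [← hW, htrig] at hge
    have h1 : |Real.sin α| < α := abs_sin_lt hα0
    have h2 : |Real.sin β| < β := abs_sin_lt hβ0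
    have h3 : |Real.sin s| < s := abs_sin_lt hs0
    have habs : |4 * R^2 * Real.sin α * Real.sin β * Real.sin s|
        = 4 * R^2 * |Real.sin α| * |Real.sin β| * |Real.sin s| := by
      rw [abs_mul, abs_mul, abs_mul]
      congr 2
      congr 1
      rw [abs_of_pos (by positivity : (0:ℝ) < 4 * R^2)]
    rw [habs] at hge
    have hprod : 4 * R^2 * |Real.sin α| * |Real.sin β| * |Real.sin s|
        < 4 * R^2 * α * β * s := by
      have n2 := abs_nonneg (Real.sin β)
      have n3 := abs_nonneg (Real.sin s)
      have m1 : |Real.sin α| * |Real.sin β| ≤ α * β :=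
        mul_le_mul h1.le h2.le n2 hα0.le
      have m2 : |Real.sin α| * |Real.sin β| * |Real.sin s| < α * β * s :=
        lt_of_le_of_lt (mul_le_mul_of_nonneg_right m1 n3)
          (mul_lt_mul_of_pos_left h3 (mul_pos hα0 hβ0))
      have m3 : 4 * R^2 * (|Real.sin α| * |Real.sin β| * |Real.sin s|)
          < 4 * R^2 * (α * β * s) :=
        mul_lt_mul_of_pos_left m2 (by positivity)
      calc 4 * R^2 * |Real.sin α| * |Real.sin β| * |Real.sin s|
          = 4 * R^2 * (|Real.sin α| * |Real.sin β| * |Real.sin s|) := by ring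
        _ < 4 * R^2 * (α * β * s) := m3
        _ = 4 * R^2 * α * β * s := by ring
    have hαβ : α * β ≤ s^2 / 4 := by
      have he : s = α + β := by rw [hα, hβ, hs]; ring
      rw [he]
      exact quarter_aux α β
    have hsL : s ≤ L / (2 * R) := by
      rw [hs]
      exact half_le_aux (c - a) L R hR hca
    have hcube : R^2 * s^3 ≤ R^2 * (L / (2*R))^3 := by
      gcongr
    have heq : R^2 * (L / (2*R))^3 = L^3 / (8 * R) := by
      field_simp; ring
    have hfin : 4 * R^2 * α * β * s ≤ L^3 / (8*R) := by
      have hstep : 4 * R^2 * α * β * s ≤ 4 * R^2 * (s^2/4) * s := by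
        have : 4 * R^2 * (α * β) * s ≤ 4 * R^2 * (s^2/4) * s := by
          gcongr <;> positivity
        linarith [this, (by ring : 4 * R^2 * (α * β) * s = 4 * R^2 * α * β * s)]
      have h2' : 4 * R^2 * (s^2/4) * s = R^2 * s^3 := by ring
      rw [h2'] at hstep
      linarith [hcube, heq.le]
    have hAL : L^3 / (8*R) ≤ A := by
      rw [div_le_iff₀ (by positivity)]
      linarith
    linarith

/-- an arc of length `L ≤ 2(A_L R)^{1/3}` on a circle of radius `R`
contains at most two lattice points. -/
theorem stmt_7 (O v₀ v₁ v₂ : EuclideanSpace ℝ (Fin 2))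
    (hli : LinearIndependent ℝ ![v₁, v₂])
    (R L θ₀ : ℝ) (hR : 0 < R) (hL : 0 < L)
    (hsmall : L ≤ 2 * (|wedge v₁ v₂| * R) ^ ((1 : ℝ) / 3)) :
    (arcOf O R θ₀ L ∩ lat v₀ v₁ v₂).ncard ≤ 2 := by
  set A := |wedge v₁ v₂| with hA
  have hL3 : L^3 ≤ 8 * A * R := by
    have hx : (0:ℝ) ≤ A * R := by positivity
    have hcube : ((A * R) ^ ((1:ℝ)/3))^3 = A * R := by
      rw [← Real.rpow_natCast ((A*R) ^ ((1:ℝ)/3)) 3, ← Real.rpow_mul hx]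
      norm_num
    have hp := pow_le_pow_left₀ hL.le hsmall 3
    calc L^3 ≤ (2 * (A*R) ^ ((1:ℝ)/3))^3 := hp
      _ = 8 * ((A*R) ^ ((1:ℝ)/3))^3 := by ring
      _ = 8 * (A * R) := by rw [hcube]
      _ = 8 * A * R := by ring
  by_contra hcon
  push_neg at hcon
  have hfin : (arcOf O R θ₀ L ∩ lat v₀ v₁ v₂).Finite :=
    Set.finite_of_ncard_ne_zero (by omega)
  rw [Set.two_lt_ncard hfin] at hcon
  obtain ⟨p, hp, q, hq, r, hr, hpq, hpr, hqr⟩ := hcon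
  obtain ⟨⟨θp, hθp, rfl⟩, hlp⟩ := hp
  obtain ⟨⟨θq, hθq, rfl⟩, hlq⟩ := hq
  obtain ⟨⟨θr, hθr, rfl⟩, hlr⟩ := hr
  have key := key_lemma O v₀ v₁ v₂ hli R L hR hL3
  have gap : ∀ x y : ℝ, x ∈ Set.Icc θ₀ (θ₀ + L/R) → y ∈ Set.Icc θ₀ (θ₀ + L/R) →
      y - x ≤ L/R := by
    intro x y hx hy
    simp only [Set.mem_Icc] at hx hy
    linarith [hx.1, hy.2]
  have hpq' : θp ≠ θq := fun h => hpq (by rw [h])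
  have hpr' : θp ≠ θr := fun h => hpr (by rw [h])
  have hqr' : θq ≠ θr := fun h => hqr (by rw [h])
  rcases lt_trichotomy θp θq with h1 | h1 | h1
  · rcases lt_trichotomy θq θr with h2 | h2 | h2
    · exact key θp θq θr h1 h2 (gap _ _ hθp hθr) hlp hlq hlr hpq hqr hpr
    · exact absurd h2 hqr'
    · rcases lt_trichotomy θp θr with h3 | h3 | h3
      · exact key θp θr θq h3 h2 (gap _ _ hθp hθq) hlp hlr hlq hpr hqr.symm hpq
      · exact absurd h3 hpr'
      · exact key θr θp θq h3 h1 (gap _ _ hθr hθq) hlr hlp hlq hpr.symm hpq hqr.symm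
  · exact absurd h1 hpq'
  · rcases lt_trichotomy θp θr with h2 | h2 | h2
    · exact key θq θp θr h1 h2 (gap _ _ hθq hθr) hlq hlp hlr hpq.symm hpr hqr
    · exact absurd h2 hpr'
    · rcases lt_trichotomy θq θr with h3 | h3 | h3
      · exact key θq θr θp h3 h2 (gap _ _ hθq hθp) hlq hlr hlp hqr hpr.symm hpq.symm
      · exact absurd h3 hqr'
      · exact key θr θq θp h3 h1 (gap _ _ hθr hθp) hlr hlq hlp hqr.symm hpq.symm hpr.symm
end

section
/- Let C be an arc of length L on a circle of radius R, and let L be a lattice. Then the number of lattice points on C satisfies #(C ∩ L) < 2 + L/(A_L R)^{1/3}. -/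
open Real

lemma wedge_ne_zero {v₁ v₂ : EuclideanSpace ℝ (Fin 2)}
    (hli : LinearIndependent ℝ ![v₁, v₂]) : wedge v₁ v₂ ≠ 0 := by
  intro h
  have hw : v₁ 0 * v₂ 1 - v₁ 1 * v₂ 0 = 0 := h
  have hp := LinearIndependent.pair_iff.mp hli
  have h1 := hp (v₂ 1) (-(v₁ 1)) (by
    ext i
    have : ∀ i : Fin 2, ((v₂ 1) • v₁ + (-(v₁ 1)) • v₂) i = v₂ 1 * v₁ i - v₁ 1 * v₂ i := by
      intro i; simp [PiLp.add_apply, PiLp.smul_apply]; ring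
    rw [this i]
    fin_cases i
    · show v₂ 1 * v₁ 0 - v₁ 1 * v₂ 0 = 0; linarith
    · show v₂ 1 * v₁ 1 - v₁ 1 * v₂ 1 = 0; ring)
  have h2 := hp (v₂ 0) (-(v₁ 0)) (by
    ext i
    have : ∀ i : Fin 2, ((v₂ 0) • v₁ + (-(v₁ 0)) • v₂) i = v₂ 0 * v₁ i - v₁ 0 * v₂ i := by
      intro i; simp [PiLp.add_apply, PiLp.smul_apply]; ring
    rw [this i]
    fin_cases i
    · show v₂ 0 * v₁ 0 - v₁ 0 * v₂ 0 = 0; ring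
    · show v₂ 0 * v₁ 1 - v₁ 0 * v₂ 1 = 0; linarith)
  have hv1 : v₁ = 0 := by
    ext i
    fin_cases i
    · show v₁ 0 = 0; have := h2.2; simpa [neg_eq_zero] using this
    · show v₁ 1 = 0; have := h1.2; simpa [neg_eq_zero] using this
  exact hli.ne_zero 0 (by simpa using hv1)

lemma circle_collinear_false {O : EuclideanSpace ℝ (Fin 2)} {R x y z t : ℝ} (hR : 0 < R)
    (hxy : circlePt O R x ≠ circlePt O R y)
    (hxz : circlePt O R x ≠ circlePt O R z)
    (hyz : circlePt O R y ≠ circlePt O R z)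
    (h : circlePt O R z - circlePt O R x = t • (circlePt O R y - circlePt O R x)) : False := by
  have h0 : (O 0 + R * cos z) - (O 0 + R * cos x)
      = t * ((O 0 + R * cos y) - (O 0 + R * cos x)) := congrArg (fun v : EuclideanSpace ℝ (Fin 2) => v 0) h
  have h1 : (O 1 + R * sin z) - (O 1 + R * sin x)
      = t * ((O 1 + R * sin y) - (O 1 + R * sin x)) := congrArg (fun v : EuclideanSpace ℝ (Fin 2) => v 1) h
  have e1 : cos z - cos x = t * (cos y - cos x) :=
    mul_left_cancel₀ hR.ne' (by linear_combination h0)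
  have e2 : sin z - sin x = t * (sin y - sin x) :=
    mul_left_cancel₀ hR.ne' (by linear_combination h1)
  set D := (cos x - cos y) ^ 2 + (sin x - sin y) ^ 2 with hDdef
  have hDne : D ≠ 0 := by
    intro hD0
    have hc : cos x = cos y := by
      nlinarith [sq_nonneg (cos x - cos y), sq_nonneg (sin x - sin y)]
    have hs : sin x = sin y := by
      nlinarith [sq_nonneg (cos x - cos y), sq_nonneg (sin x - sin y)]
    exact hxy (by rw [circlePt, circlePt, hc, hs])
  have hcz : cos z = cos x + t * (cos y - cos x) := by linarith
  have hsz : sin z = sin x + t * (sin y - sin x) := by linarith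
  have p1 := sin_sq_add_cos_sq x
  have p2 := sin_sq_add_cos_sq y
  have p3 := sin_sq_add_cos_sq z
  have htt : t * (t - 1) * D = 0 := by
    rw [hDdef]
    linear_combination p3 - p1 - t * p2 + t * p1
      - (cos z + (cos x + t * (cos y - cos x))) * hcz
      - (sin z + (sin x + t * (sin y - sin x))) * hsz
  have ht01 : t = 0 ∨ t = 1 := by
    rcases mul_eq_zero.mp htt with h' | h'
    · rcases mul_eq_zero.mp h' with h'' | h''
      · exact Or.inl h''
      · exact Or.inr (by linarith)
    · exact absurd h' hDne
  rcases ht01 with rfl | rfl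
  · rw [zero_smul] at h
    exact hxz (sub_eq_zero.mp h).symm
  · rw [one_smul] at h
    exact hyz (sub_left_inj.mp h).symm

lemma wedge_smul (a b c d : ℝ) (v₁ v₂ : EuclideanSpace ℝ (Fin 2)) :
    wedge (a • v₁ + b • v₂) (c • v₁ + d • v₂) = (a * d - b * c) * wedge v₁ v₂ := by
  simp only [wedge, PiLp.add_apply, PiLp.smul_apply, smul_eq_mul]
  ring

lemma rcube_le {X c : ℝ} (hX : 0 ≤ X) (hc : 0 ≤ c) (h : X ≤ c ^ 3) :
    X ^ ((1 : ℝ) / 3) ≤ c := by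
  calc X ^ ((1:ℝ)/3) ≤ (c ^ 3) ^ ((1:ℝ)/3) := Real.rpow_le_rpow hX h (by norm_num)
    _ = c := by
      rw [← Real.rpow_natCast c 3, ← Real.rpow_mul hc]
      norm_num

set_option maxHeartbeats 1000000 in
lemma gap_lb (O v₀ v₁ v₂ : EuclideanSpace ℝ (Fin 2))
    (hli : LinearIndependent ℝ ![v₁, v₂]) {R x y z : ℝ} (hR : 0 < R)
    (hx : circlePt O R x ∈ lat v₀ v₁ v₂)
    (hy : circlePt O R y ∈ lat v₀ v₁ v₂)
    (hz : circlePt O R z ∈ lat v₀ v₁ v₂)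
    (hxy : x < y) (hyz : y < z)
    (hxy' : circlePt O R x ≠ circlePt O R y)
    (hxz' : circlePt O R x ≠ circlePt O R z)
    (hyz' : circlePt O R y ≠ circlePt O R z) :
    2 * (|wedge v₁ v₂| / R ^ 2) ^ ((1 : ℝ) / 3) ≤ z - x := by
  set A := |wedge v₁ v₂| with hAdef
  have hA : 0 < A := abs_pos.mpr (wedge_ne_zero hli)
  obtain ⟨m₁, n₁, hP⟩ := hx
  obtain ⟨m₂, n₂, hQ⟩ := hy
  obtain ⟨m₃, n₃, hS⟩ := hz
  set P := circlePt O R x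
  set Q := circlePt O R y
  set S := circlePt O R z
  set a : ℤ := m₂ - m₁
  set b : ℤ := n₂ - n₁
  set c : ℤ := m₃ - m₁
  set d : ℤ := n₃ - n₁
  have hQP : Q - P = ((a : ℝ)) • v₁ + ((b : ℝ)) • v₂ := by
    rw [hQ, hP]; push_cast [a, b]; module
  have hSP : S - P = ((c : ℝ)) • v₁ + ((d : ℝ)) • v₂ := by
    rw [hS, hP]; push_cast [c, d]; module
  have hw : wedge (Q - P) (S - P) = ((a * d - b * c : ℤ) : ℝ) * wedge v₁ v₂ := by
    rw [hQP, hSP, wedge_smul]; push_cast; ring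
  have hk : (a * d - b * c : ℤ) ≠ 0 := by
    intro h0
    have h0' : (a : ℝ) * d - b * c = 0 := by exact_mod_cast congrArg (Int.cast : ℤ → ℝ) h0
    have hab : ¬((a : ℝ) = 0 ∧ (b : ℝ) = 0) := by
      rintro ⟨ha, hb⟩
      apply hxy'
      have : Q - P = 0 := by rw [hQP, ha, hb]; simp
      exact (sub_eq_zero.mp this).symm
    have : ∃ t : ℝ, (c : ℝ) = t * a ∧ (d : ℝ) = t * b := by
      by_cases ha : (a : ℝ) = 0
      · have hb : (b : ℝ) ≠ 0 := fun hb => hab ⟨ha, hb⟩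
        have hc0 : (c : ℝ) = 0 := by
          have : (b : ℝ) * c = 0 := by rw [ha] at h0'; linarith
          rcases mul_eq_zero.mp this with h' | h'
          · exact absurd h' hb
          · exact h'
        exact ⟨(d : ℝ) / b, by rw [hc0, ha]; ring, by field_simp⟩
      · refine ⟨(c : ℝ) / a, by field_simp, ?_⟩
        field_simp
        linarith [h0']
    obtain ⟨t, hc', hd'⟩ := this
    have hcol : S - P = t • (Q - P) := by
      rw [hQP, hSP, hc', hd']; module
    exact circle_collinear_false hR hxy' hxz' hyz' hcol
  have hone : (1 : ℝ) ≤ |((a * d - b * c : ℤ) : ℝ)| := by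
    rw [← Int.cast_abs]
    exact_mod_cast Int.one_le_abs hk
  have hlow : A ≤ |wedge (Q - P) (S - P)| := by
    rw [hw, abs_mul]
    calc A = 1 * A := (one_mul A).symm
      _ ≤ |((a * d - b * c : ℤ) : ℝ)| * A := by
          apply mul_le_mul_of_nonneg_right hone hA.le
  -- upper bound
  have hc0 : ∀ θ : ℝ, (circlePt O R θ) 0 = O 0 + R * cos θ := fun _ => rfl
  have hc1 : ∀ θ : ℝ, (circlePt O R θ) 1 = O 1 + R * sin θ := fun _ => rfl
  have hsub : ∀ (U V : EuclideanSpace ℝ (Fin 2)) (i : Fin 2), (U - V) i = U i - V i :=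
    fun _ _ _ => rfl
  set Expr := (cos y - cos x) * (sin z - sin x) - (sin y - sin x) * (cos z - cos x) with hE
  have hwe : wedge (Q - P) (S - P) = R ^ 2 * Expr := by
    show wedge (circlePt O R y - circlePt O R x) (circlePt O R z - circlePt O R x) = _
    simp only [wedge, hsub, hc0, hc1, hE]
    ring
  have hid : Expr = sin (y - x) * (1 - cos (z - y)) + sin (z - y) * (1 - cos (y - x)) := by
    rw [hE, Real.sin_sub, Real.sin_sub, Real.cos_sub, Real.cos_sub]
    linear_combination (sin z * cos x - cos z * sin x) * Real.sin_sq_add_cos_sq y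
  set α := y - x with hα
  set β := z - y with hβ
  clear_value α β
  have hα0 : 0 < α := by simp [hα]; linarith
  have hβ0 : 0 < β := by simp [hβ]; linarith
  have habs : |Expr| ≤ α * (β ^ 2 / 2) + β * (α ^ 2 / 2) := by
    rw [hid]
    calc |sin α * (1 - cos β) + sin β * (1 - cos α)|
        ≤ |sin α * (1 - cos β)| + |sin β * (1 - cos α)| := abs_add_le _ _
      _ = |sin α| * (1 - cos β) + |sin β| * (1 - cos α) := by
          rw [abs_mul, abs_mul,
            abs_of_nonneg (show (0:ℝ) ≤ 1 - cos β by linarith [Real.cos_le_one β]),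
            abs_of_nonneg (show (0:ℝ) ≤ 1 - cos α by linarith [Real.cos_le_one α])]
      _ ≤ α * (β ^ 2 / 2) + β * (α ^ 2 / 2) := by
          apply add_le_add
          · apply mul_le_mul
            · exact (abs_sin_le_abs).trans_eq (abs_of_pos hα0)
            · linarith [Real.one_sub_sq_div_two_le_cos (x := β)]
            · linarith [Real.cos_le_one β]
            · exact hα0.le
          · apply mul_le_mul
            · exact (abs_sin_le_abs).trans_eq (abs_of_pos hβ0)
            · linarith [Real.one_sub_sq_div_two_le_cos (x := α)]
            · linarith [Real.cos_le_one α]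
            · exact hβ0.le
  have hup : A ≤ R ^ 2 * ((z - x) ^ 3 / 8) := by
    have h1 : A ≤ R ^ 2 * |Expr| := by
      calc A ≤ |wedge (Q - P) (S - P)| := hlow
        _ = R ^ 2 * |Expr| := by rw [hwe, abs_mul, abs_of_nonneg (by positivity)]
    have hzx : z - x = α + β := by rw [hα, hβ]; ring
    have h2 : |Expr| ≤ (α + β) ^ 3 / 8 := by
      calc |Expr| ≤ α * (β ^ 2 / 2) + β * (α ^ 2 / 2) := habs
        _ ≤ (α + β) ^ 3 / 8 := by
            have hre : (α + β) ^ 3 / 8 - (α * (β ^ 2 / 2) + β * (α ^ 2 / 2))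
                = (α + β) * (α - β) ^ 2 / 8 := by ring
            have hnn : 0 ≤ (α + β) * (α - β) ^ 2 :=
              mul_nonneg (by linarith) (sq_nonneg _)
            linarith
    rw [hzx]
    calc A ≤ R ^ 2 * |Expr| := h1
      _ ≤ R ^ 2 * ((α + β) ^ 3 / 8) := by
          apply mul_le_mul_of_nonneg_left h2 (by positivity)
  have hX : 8 * (A / R ^ 2) ≤ (z - x) ^ 3 := by
    rw [mul_div_assoc', div_le_iff₀ (by positivity)]
    nlinarith [hup]
  have h8 : (8 * (A / R ^ 2)) ^ ((1 : ℝ) / 3) = 2 * (A / R ^ 2) ^ ((1 : ℝ) / 3) := by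
    rw [Real.mul_rpow (by norm_num) (by positivity)]
    congr 1
    rw [show (8 : ℝ) = 2 ^ (3 : ℕ) by norm_num, ← Real.rpow_natCast 2 3,
      ← Real.rpow_mul (by norm_num)]
    norm_num
  rw [← h8]
  exact rcube_le (by positivity) (by linarith) hX


set_option maxHeartbeats 1000000 in
/-- #(C ∩ L) < 2 + L/(A_L R)^{1/3} for an arc of length L on a
circle of radius R. -/
theorem stmt_8 (O v₀ v₁ v₂ : EuclideanSpace ℝ (Fin 2))
    (hli : LinearIndependent ℝ ![v₁, v₂])
    (R L θ₀ : ℝ) (hR : 0 < R) (hL : 0 < L) :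
    ((arcOf O R θ₀ L ∩ lat v₀ v₁ v₂).ncard : ℝ) <
      2 + L / (|wedge v₁ v₂| * R) ^ ((1 : ℝ) / 3) := by
  classical
  have hA : 0 < |wedge v₁ v₂| := abs_pos.mpr (wedge_ne_zero hli)
  set A := |wedge v₁ v₂| with hAdef
  clear_value A
  set B := (A * R) ^ ((1 : ℝ) / 3) with hBdef
  have hBpos : 0 < B := Real.rpow_pos_of_pos (by positivity) _
  clear_value B
  have hLB : 0 < L / B := div_pos hL hBpos
  set S := arcOf O R θ₀ L ∩ lat v₀ v₁ v₂ with hSdef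
  by_cases hfin : S.Finite
  swap
  · rw [Set.Infinite.ncard (by simpa using hfin)]
    push_cast
    linarith
  set N := S.ncard with hNdef
  by_cases hN2 : N ≤ 2
  · have : (N : ℝ) ≤ 2 := by exact_mod_cast hN2
    linarith
  push_neg at hN2
  have hN3 : 3 ≤ N := hN2
  -- select angles
  have hsel : ∀ P ∈ S, ∃ θ, θ ∈ Set.Icc θ₀ (θ₀ + L / R) ∧ circlePt O R θ = P := by
    intro P hP
    obtain ⟨θ, hθ, hc⟩ := hP.1
    exact ⟨θ, hθ, hc⟩
  choose! f hf1 hf2 using hsel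
  set F := hfin.toFinset with hFdef
  have hinjF : Set.InjOn f F := by
    intro P hP P' hP' h
    simp only [hFdef, Finset.mem_coe, Set.Finite.mem_toFinset] at hP hP'
    rw [← hf2 P hP, ← hf2 P' hP', h]
  set T := F.image f with hTdef
  have hTcard : T.card = N := by
    rw [hTdef, Finset.card_image_of_injOn (by simpa using hinjF), hNdef,
      Set.ncard_eq_toFinset_card _ hfin]
  have hTmem : ∀ θ ∈ T, θ ∈ Set.Icc θ₀ (θ₀ + L / R) ∧ circlePt O R θ ∈ lat v₀ v₁ v₂ := by
    intro θ hθ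
    rw [hTdef, Finset.mem_image] at hθ
    obtain ⟨P, hPF, rfl⟩ := hθ
    rw [hFdef, Set.Finite.mem_toFinset] at hPF
    exact ⟨hf1 P hPF, by rw [hf2 P hPF]; exact hPF.2⟩
  have hTinj : ∀ θ ∈ T, ∀ θ' ∈ T, circlePt O R θ = circlePt O R θ' → θ = θ' := by
    intro θ hθ θ' hθ' h
    rw [hTdef, Finset.mem_image] at hθ hθ'
    obtain ⟨P, hPF, rfl⟩ := hθ
    obtain ⟨P', hPF', rfl⟩ := hθ'
    rw [hFdef, Set.Finite.mem_toFinset] at hPF hPF'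
    rw [hf2 P hPF, hf2 P' hPF'] at h
    rw [h]
  -- enumerate in increasing order
  set g : Fin N → ℝ := fun i => ((T.orderIsoOfFin hTcard i : ℝ)) with hgdef
  have hgmem : ∀ i, g i ∈ T := fun i => (T.orderIsoOfFin hTcard i).2
  have hglt : ∀ i j : Fin N, i < j → g i < g j := by
    intro i j h
    exact Subtype.coe_lt_coe.mpr ((T.orderIsoOfFin hTcard).lt_iff_lt.mpr h)
  set s₀ := 2 * (A / R ^ 2) ^ ((1 : ℝ) / 3) with hs₀def
  have hs₀ : 0 < s₀ := by
    rw [hs₀def]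
    positivity
  clear_value s₀
  have hgap : ∀ i j k : Fin N, i < j → j < k → s₀ ≤ g k - g i := by
    intro i j k hij hjk
    have hne : ∀ p q : Fin N, p < q → circlePt O R (g p) ≠ circlePt O R (g q) := by
      intro p q hpq h
      exact (hglt p q hpq).ne (hTinj _ (hgmem p) _ (hgmem q) h)
    rw [hs₀def, hAdef]
    exact gap_lb O v₀ v₁ v₂ hli hR (hTmem _ (hgmem i)).2 (hTmem _ (hgmem j)).2
      (hTmem _ (hgmem k)).2 (hglt i j hij) (hglt j k hjk)
      (hne i j hij) (hne i k (hij.trans hjk)) (hne j k hjk)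
  have h0N : 0 < N := by omega
  have key : ∀ j : ℕ, ∀ hj : 2 * j < N, (j : ℝ) * s₀ ≤ g ⟨2 * j, hj⟩ - g ⟨0, h0N⟩ := by
    intro j
    induction j with
    | zero => intro hj; simp
    | succ p ih =>
      intro hj
      have h2p : 2 * p < N := by omega
      have hstep := hgap ⟨2 * p, h2p⟩ ⟨2 * p + 1, by omega⟩ ⟨2 * (p + 1), hj⟩
        (by simp [Fin.mk_lt_mk]) (by simp [Fin.mk_lt_mk]; omega)
      have := ih h2p
      push_cast
      linarith
  have hIcc : ∀ i : Fin N, θ₀ ≤ g i ∧ g i ≤ θ₀ + L / R := fun i => (hTmem _ (hgmem i)).1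
  have hfinal : ((N : ℝ) - 2) * s₀ < 2 * (L / R) := by
    rcases Nat.even_or_odd N with ⟨k, hk⟩ | ⟨k, hk⟩
    · -- N = k + k
      have hk2 : 2 ≤ k := by omega
      have h2k : 2 * (k - 1) < N := by omega
      have h1 := key (k - 1) h2k
      have h2 : g ⟨2 * (k - 1), h2k⟩ < g ⟨N - 1, by omega⟩ := by
        apply hglt
        simp [Fin.mk_lt_mk]
        omega
      have h3 := (hIcc ⟨N - 1, by omega⟩).2
      have h4 := (hIcc ⟨0, h0N⟩).1
      have hNk : (N : ℝ) = 2 * k := by rw [hk]; push_cast; ring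
      have hcast : ((k - 1 : ℕ) : ℝ) = (N : ℝ) / 2 - 1 := by
        rw [Nat.cast_sub (by omega)]
        push_cast
        linarith
      have := h1
      rw [hcast] at this
      nlinarith [hs₀]
    · -- N = 2k+1
      have hk1 : 1 ≤ k := by omega
      have h2k : 2 * k < N := by omega
      have h1 := key k h2k
      have h3 := (hIcc ⟨2 * k, h2k⟩).2
      have h4 := (hIcc ⟨0, h0N⟩).1
      have hcast : ((k : ℕ) : ℝ) = ((N : ℝ) - 1) / 2 := by
        have : (N : ℝ) = 2 * k + 1 := by push_cast [hk]; ring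
        linarith
      rw [hcast] at h1
      nlinarith [hs₀]
  -- convert to the target
  have hRs : R * s₀ = 2 * B := by
    rw [hs₀def, hBdef]
    have h1 : A * R = (A / R ^ 2) * R ^ 3 := by field_simp
    rw [h1, Real.mul_rpow (by positivity) (by positivity)]
    have h2 : ((R : ℝ) ^ 3) ^ ((1 : ℝ) / 3) = R := by
      rw [← Real.rpow_natCast R 3, ← Real.rpow_mul hR.le]
      norm_num
    rw [h2]
    ring
  have hNB : ((N : ℝ) - 2) * B < L := by
    have h := mul_lt_mul_of_pos_left hfinal (show (0:ℝ) < R / 2 by positivity)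
    have hr1 : R / 2 * (2 * (L / R)) = L := by field_simp
    have hr2 : R / 2 * (((N : ℝ) - 2) * s₀) = ((N : ℝ) - 2) * B := by
      linear_combination (((N : ℝ) - 2) / 2) * hRs
    linarith
  have : (N : ℝ) - 2 < L / B := (lt_div_iff₀ hBpos).mpr hNB
  linarith
end

section
/- Let P₁, P₂, P₃ be points on a circle of radius R and let P₁', P₂', P₃' be points with ‖P_j' − P_k'‖ ≥ d for j ≠ k (some d > 0) and ‖P_j − P_j'‖ ≤ δ for j = 1,2,3. If δ < d²/(2(R + d + √((R+d)² − d²))), then the points P₁', P₂', P₃' are not collinear. -/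
set_option maxHeartbeats 1000000

lemma key_lemma_s15 (C A B M A' B' M' : EuclideanSpace ℝ (Fin 2)) (R d δ t : ℝ)
    (hR : 0 < R) (hd : 0 < d)
    (hA : dist A C = R) (hB : dist B C = R) (hM : dist M C = R)
    (hdAM : d ≤ dist A' M') (hdMB : d ≤ dist M' B')
    (hcA : dist A A' ≤ δ) (hcB : dist B B' ≤ δ) (hcM : dist M M' ≤ δ)
    (ht0 : 0 ≤ t) (ht1 : t ≤ 1)
    (hM' : M' - A' = t • (B' - A'))
    (h2δ : 2 * δ < d)
    (hkey : 4 * δ * (R + d - δ) < d ^ 2) : False := by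
  have hδ0 : 0 ≤ δ := le_trans dist_nonneg hcA
  have hM'' : M' = t • (B' - A') + A' := by rw [← hM']; abel
  set c := dist A' B' with hcdef
  have hAM : dist A' M' = t * c := by
    have e : A' - M' = t • (A' - B') := by rw [hM'']; module
    rw [dist_eq_norm, e, norm_smul, Real.norm_eq_abs, abs_of_nonneg ht0, ← dist_eq_norm]
  have hMB : dist M' B' = (1 - t) * c := by
    have e : M' - B' = (1 - t) • (A' - B') := by rw [hM'']; module
    rw [dist_eq_norm, e, norm_smul, Real.norm_eq_abs,
      abs_of_nonneg (by linarith : (0:ℝ) ≤ 1 - t), ← dist_eq_norm]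
  set Q := (1 - t) • A + t • B with hQdef
  have hM'Q : dist M' Q ≤ δ := by
    have e : M' - Q = (1 - t) • (A' - A) + t • (B' - B) := by rw [hM'', hQdef]; module
    calc dist M' Q = ‖(1 - t) • (A' - A) + t • (B' - B)‖ := by rw [dist_eq_norm, e]
      _ ≤ ‖(1 - t) • (A' - A)‖ + ‖t • (B' - B)‖ := norm_add_le _ _
      _ = (1 - t) * dist A' A + t * dist B' B := by
          rw [norm_smul, norm_smul, Real.norm_eq_abs, Real.norm_eq_abs,
            abs_of_nonneg (by linarith : (0:ℝ) ≤ 1 - t), abs_of_nonneg ht0,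
            dist_eq_norm, dist_eq_norm]
      _ ≤ (1 - t) * δ + t * δ := by
          have h1 : dist A' A ≤ δ := by rw [dist_comm]; exact hcA
          have h2 : dist B' B ≤ δ := by rw [dist_comm]; exact hcB
          have := mul_le_mul_of_nonneg_left h1 (by linarith : (0:ℝ) ≤ 1 - t)
          have := mul_le_mul_of_nonneg_left h2 ht0
          linarith
      _ = δ := by ring
  set ℓ := dist A B with hldef
  have hx : ‖A - C‖ = R := by rw [← dist_eq_norm]; exact hA
  have hy : ‖B - C‖ = R := by rw [← dist_eq_norm]; exact hB
  have hQC : Q - C = (1 - t) • (A - C) + t • (B - C) := by rw [hQdef]; module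
  set ip : ℝ := inner ℝ (A - C) (B - C) with hip
  have e1 : dist Q C ^ 2 = (1 - t) ^ 2 * R ^ 2 + 2 * ((1 - t) * t * ip) + t ^ 2 * R ^ 2 := by
    rw [dist_eq_norm, hQC, norm_add_sq_real, real_inner_smul_left, real_inner_smul_right,
      norm_smul, norm_smul, Real.norm_eq_abs, Real.norm_eq_abs, hx, hy, ← hip]
    rw [mul_pow, mul_pow, sq_abs, sq_abs]; ring
  have e2 : ℓ ^ 2 = R ^ 2 - 2 * ip + R ^ 2 := by
    have e : A - B = (A - C) - (B - C) := by module
    rw [hldef, dist_eq_norm, e, norm_sub_sq_real, hx, hy, ← hip]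
  have hq2 : dist Q C ^ 2 = R ^ 2 - t * (1 - t) * ℓ ^ 2 := by
    have hipval : ip = R ^ 2 - ℓ ^ 2 / 2 := by linarith
    rw [e1, hipval]; ring
  -- basic distance inequalities
  have hcd1 : d ≤ t * c := hAM ▸ hdAM
  have hcd2 : d ≤ (1 - t) * c := hMB ▸ hdMB
  have hc2d : 2 * d ≤ c := by linarith
  have hℓc : c - 2 * δ ≤ ℓ := by
    have h4 := dist_triangle4 A' A B B'
    rw [dist_comm A' A] at h4
    have h5 : dist B B' ≤ δ := hcB
    linarith [h4, hcA, h5]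
  have hℓ2R : ℓ ≤ 2 * R := by
    have := dist_triangle A C B
    rw [dist_comm C B] at this
    linarith
  have hRQ : R ≤ 2 * δ + dist Q C := by
    have h4 := dist_triangle4 M M' Q C
    rw [hM] at h4
    linarith
  have hdRδ : d ≤ R + δ := by linarith
  have hδd4 : 4 * δ < d := by
    have hRδ : 0 ≤ δ * (R - δ) := mul_nonneg hδ0 (by linarith)
    have h1 : 4 * δ * d < d * d := by linarith only [hkey, hRδ]
    exact lt_of_mul_lt_mul_right (by linarith) hd.le
  have hR2δ : 0 < R - 2 * δ := by linarith
  have hsq : (R - 2 * δ) ^ 2 ≤ dist Q C ^ 2 := by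
    have hq : R - 2 * δ ≤ dist Q C := by linarith
    exact pow_le_pow_left₀ hR2δ.le hq 2
  have hc0 : 0 < c := by linarith
  have hℓ0 : 0 ≤ ℓ := dist_nonneg
  have h5 : c * (d - δ) ≤ d * ℓ := by
    have ha := mul_nonneg hδ0 (show (0:ℝ) ≤ c - 2 * d by linarith)
    have hb := mul_le_mul_of_nonneg_left hℓc hd.le
    linarith only [ha, hb]
  have hn : 0 ≤ c * (d - δ) := mul_nonneg hc0.le (by linarith)
  have h7 : (c * (d - δ)) ^ 2 ≤ (d * ℓ) ^ 2 := pow_le_pow_left₀ hn h5 2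
  have h6 : d ^ 2 * ℓ ^ 2 ≤ (t * c) * ((1 - t) * c) * ℓ ^ 2 := by
    have h := mul_le_mul hcd1 hcd2 hd.le (le_trans hd.le hcd1)
    have h' := mul_le_mul_of_nonneg_right h (sq_nonneg ℓ)
    calc d ^ 2 * ℓ ^ 2 = d * d * ℓ ^ 2 := by ring
      _ ≤ (t * c) * ((1 - t) * c) * ℓ ^ 2 := h'
  have hstep : (d - δ) ^ 2 ≤ t * (1 - t) * ℓ ^ 2 := by
    have hcc : 0 < c ^ 2 := pow_pos hc0 2
    have h8 : c ^ 2 * ((d - δ) ^ 2) ≤ c ^ 2 * (t * (1 - t) * ℓ ^ 2) := by linarith only [h7, h6]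
    exact le_of_mul_le_mul_left h8 hcc
  linarith only [hsq, hq2, hstep, hkey, mul_nonneg hδ0 hd.le, sq_nonneg δ]

lemma param_lemma (P₀ A' B' M' v : EuclideanSpace ℝ (Fin 2)) (a b m : ℝ)
    (hA : A' = a • v + P₀) (hB : B' = b • v + P₀) (hM : M' = m • v + P₀)
    (hne : a ≠ b) (h1 : a ≤ m) (h2 : m ≤ b) :
    ∃ t : ℝ, 0 ≤ t ∧ t ≤ 1 ∧ M' - A' = t • (B' - A') := by
  have hab : a < b := lt_of_le_of_ne (le_trans h1 h2) hne
  have hba : (0:ℝ) < b - a := by linarith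
  refine ⟨(m - a) / (b - a), div_nonneg (by linarith) hba.le, ?_, ?_⟩
  · rw [div_le_one hba]; linarith
  · have e1 : M' - A' = (m - a) • v := by rw [hA, hM]; module
    have e2 : B' - A' = (b - a) • v := by rw [hA, hB]; module
    rw [e1, e2, smul_smul, div_mul_cancel₀ _ (ne_of_gt hba)]

/-- three points δ-close to a circle of radius R, pairwise at
distance ≥ d, are not collinear when δ < d²/(2(R+d+√((R+d)²−d²))). -/
theorem stmt_15 (C P₁ P₂ P₃ P₁' P₂' P₃' : EuclideanSpace ℝ (Fin 2)) (R d δ : ℝ)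
    (hR : 0 < R) (hd : 0 < d)
    (h₁ : dist P₁ C = R) (h₂ : dist P₂ C = R) (h₃ : dist P₃ C = R)
    (hd₁₂ : d ≤ dist P₁' P₂') (hd₁₃ : d ≤ dist P₁' P₃') (hd₂₃ : d ≤ dist P₂' P₃')
    (hc₁ : dist P₁ P₁' ≤ δ) (hc₂ : dist P₂ P₂' ≤ δ) (hc₃ : dist P₃ P₃' ≤ δ)
    (hδ : δ < d ^ 2 / (2 * (R + d + Real.sqrt ((R + d) ^ 2 - d ^ 2)))) :
    ¬ Collinear ℝ ({P₁', P₂', P₃'} : Set (EuclideanSpace ℝ (Fin 2))) := by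
  intro hcol
  have hδ0 : 0 ≤ δ := le_trans dist_nonneg hc₁
  set s := Real.sqrt ((R + d) ^ 2 - d ^ 2) with hs
  have hs0 : 0 ≤ s := Real.sqrt_nonneg _
  have hssq : s ^ 2 = (R + d) ^ 2 - d ^ 2 := Real.sq_sqrt (by nlinarith)
  have hsR : R ≤ s := by
    have h := Real.sqrt_le_sqrt (show R ^ 2 ≤ (R + d) ^ 2 - d ^ 2 by nlinarith)
    rwa [Real.sqrt_sq hR.le] at h
  have hpos : 0 < 2 * (R + d + s) := by linarith
  have hδ' : δ * (2 * (R + d + s)) < d ^ 2 := (lt_div_iff₀ hpos).mp hδ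
  have hfac : (R + d - s) * (R + d + s) = d ^ 2 := by linear_combination -hssq
  have h1 : 2 * δ < R + d - s := by nlinarith [hδ', hpos, hfac]
  have h2δ : 2 * δ < d := by linarith
  have hkey : 4 * δ * (R + d - δ) < d ^ 2 := by
    have hsq2 : s ^ 2 < (R + d - 2 * δ) ^ 2 := by nlinarith [hs0, h1]
    nlinarith [hsq2, hssq]
  -- extract a line parametrization
  obtain ⟨v, hv⟩ := (collinear_iff_of_mem
    (show P₁' ∈ ({P₁', P₂', P₃'} : Set (EuclideanSpace ℝ (Fin 2))) by simp)).mp hcol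
  obtain ⟨r₁, e₁⟩ := hv P₁' (by simp)
  obtain ⟨r₂, e₂⟩ := hv P₂' (by simp)
  obtain ⟨r₃, e₃⟩ := hv P₃' (by simp)
  simp only [vadd_eq_add] at e₁ e₂ e₃
  have hne : ∀ (p q : EuclideanSpace ℝ (Fin 2)) (rp rq : ℝ), p = rp • v + P₁' →
      q = rq • v + P₁' → d ≤ dist p q → rp ≠ rq := by
    intro p q rp rq hp hq hdpq h
    rw [hp, hq, h, dist_self] at hdpq
    linarith
  have hne12 : r₁ ≠ r₂ := hne _ _ _ _ e₁ e₂ hd₁₂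
  have hne13 : r₁ ≠ r₃ := hne _ _ _ _ e₁ e₃ hd₁₃
  have hne23 : r₂ ≠ r₃ := hne _ _ _ _ e₂ e₃ hd₂₃
  -- generic middle-point argument
  have main : ∀ (X Y Z X' Y' Z' : EuclideanSpace ℝ (Fin 2)) (x y z : ℝ),
      X' = x • v + P₁' → Y' = y • v + P₁' → Z' = z • v + P₁' →
      dist X C = R → dist Y C = R → dist Z C = R →
      d ≤ dist X' Y' → d ≤ dist Y' Z' →
      dist X X' ≤ δ → dist Y Y' ≤ δ → dist Z Z' ≤ δ →
      x ≤ y → y ≤ z → x ≠ z → False := by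
    intro X Y Z X' Y' Z' x y z hX' hY' hZ' hX hY hZ hdXY hdYZ hcX hcY hcZ hxy hyz hxz
    obtain ⟨t, ht0, ht1, hM'⟩ := param_lemma P₁' X' Z' Y' v x z y hX' hZ' hY' hxz hxy hyz
    exact key_lemma_s15 C X Z Y X' Z' Y' R d δ t hR hd hX hZ hY
      (by rw [dist_comm] at hdXY ⊢; exact hdXY) hdYZ hcX hcZ hcY ht0 ht1 hM' h2δ hkey
  rcases le_total r₁ r₂ with h12 | h12 <;> rcases le_total r₂ r₃ with h23 | h23 <;>
    rcases le_total r₁ r₃ with h13 | h13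
  · exact main P₁ P₂ P₃ P₁' P₂' P₃' r₁ r₂ r₃ e₁ e₂ e₃ h₁ h₂ h₃ hd₁₂ hd₂₃ hc₁ hc₂ hc₃ h12 h23 hne13
  · exact main P₁ P₂ P₃ P₁' P₂' P₃' r₁ r₂ r₃ e₁ e₂ e₃ h₁ h₂ h₃ hd₁₂ hd₂₃ hc₁ hc₂ hc₃ h12 h23 hne13
  · exact main P₁ P₃ P₂ P₁' P₃' P₂' r₁ r₃ r₂ e₁ e₃ e₂ h₁ h₃ h₂ hd₁₃
      (by rw [dist_comm]; exact hd₂₃) hc₁ hc₃ hc₂ h13 h23 hne12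
  · exact main P₃ P₁ P₂ P₃' P₁' P₂' r₃ r₁ r₂ e₃ e₁ e₂ h₃ h₁ h₂
      (by rw [dist_comm]; exact hd₁₃) hd₁₂ hc₃ hc₁ hc₂ h13 h12 hne23.symm
  · exact main P₂ P₁ P₃ P₂' P₁' P₃' r₂ r₁ r₃ e₂ e₁ e₃ h₂ h₁ h₃
      (by rw [dist_comm]; exact hd₁₂) hd₁₃ hc₂ hc₁ hc₃ h12 h13 hne23
  · exact main P₂ P₃ P₁ P₂' P₃' P₁' r₂ r₃ r₁ e₂ e₃ e₁ h₂ h₃ h₁ hd₂₃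
      (by rw [dist_comm]; exact hd₁₃) hc₂ hc₃ hc₁ h23 h13 hne12.symm
  · exact main P₃ P₂ P₁ P₃' P₂' P₁' r₃ r₂ r₁ e₃ e₂ e₁ h₃ h₂ h₁
      (by rw [dist_comm]; exact hd₂₃) (by rw [dist_comm]; exact hd₁₂) hc₃ hc₂ hc₁ h23 h12 hne13.symm
  · exact main P₃ P₂ P₁ P₃' P₂' P₁' r₃ r₂ r₁ e₃ e₂ e₁ h₃ h₂ h₁
      (by rw [dist_comm]; exact hd₂₃) (by rw [dist_comm]; exact hd₁₂) hc₃ hc₂ hc₁ h23 h12 hne13.symm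
end
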